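/- Let φ_λ(x) = e^{-πλ²|x|²} on R^d and window g(x) = e^{-π|x|²}. For 1 ≤ p, q ≤ ∞, the mixed-norm of the STFT satisfies ||V_g φ_λ||_{L^{p,q}} := ( ∫ ( ∫ |V_g φ_λ(x,ω)|^p dx )^{q/p} dω )^{1/q} ≍ λ^{-d/p} (1+λ)^{d(1/p + 1/q - 1)}, with implied constants depending only on d, p, q (and not on λ > 0). -/

import Mathlib

open MeasureTheory Complex ComplexConjugate SchwartzMap
open scoped RealInnerProductSpace ENNReal

noncomputable section

abbrev Ed (d : ℕ) : Type := EuclideanSpace ℝ (Fin d)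

/-- Fourier transform with the normalization `𝓕 f η = ∫ f(y) e^{-2πi y·η} dy`. -/
def FT {d : ℕ} (f : Ed d → ℂ) (η : Ed d) : ℂ :=
  ∫ y, Complex.exp (-(2 * (Real.pi : ℂ) * Complex.I * (⟪y, η⟫ : ℂ))) * f y

/-- Inverse Fourier transform. -/
def FTinv {d : ℕ} (f : Ed d → ℂ) (x : Ed d) : ℂ :=
  ∫ η, Complex.exp (2 * (Real.pi : ℂ) * Complex.I * (⟪x, η⟫ : ℂ)) * f η

/-- Short-time Fourier transform of `f` with window `g`. -/
def STFT {d : ℕ} (g f : Ed d → ℂ) (x ω : Ed d) : ℂ :=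
  ∫ y, Complex.exp (-(2 * (Real.pi : ℂ) * Complex.I * (⟪ω, y⟫ : ℂ))) * f y * conj (g (y - x))

-- Lemma A : explicit value of the norm of the STFT of a dilated gaussian
lemma norm_stft (d : ℕ) (lam : ℝ) (hlam : 0 < lam) (x ω : Ed d) :
    ‖STFT (fun y => Complex.exp (-((Real.pi * ‖y‖ ^ 2 : ℝ) : ℂ)))
        (fun y => Complex.exp (-((Real.pi * lam ^ 2 * ‖y‖ ^ 2 : ℝ) : ℂ))) x ω‖ =
      (1 + lam ^ 2) ^ (-((d : ℝ) / 2)) *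
        (Real.exp (-(Real.pi * (lam ^ 2 / (1 + lam ^ 2))) * ‖x‖ ^ 2) *
         Real.exp (-(Real.pi * (1 / (1 + lam ^ 2))) * ‖ω‖ ^ 2)) := by
  have hs : (0:ℝ) < 1 + lam ^ 2 := by positivity
  set s : ℝ := 1 + lam ^ 2 with hs_def
  set c : Ed d := s⁻¹ • x with hc_def
  have hb : (0:ℝ) < Real.pi * s := by positivity
  have hbre : (0:ℝ) < (((Real.pi * s : ℝ) : ℂ)).re := by simpa using hb
  -- pointwise rewriting of the integrand
  have h1 : ∀ y : Ed d,
      Complex.exp (-(2 * (Real.pi : ℂ) * Complex.I * (⟪ω, y⟫ : ℂ))) *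
        Complex.exp (-((Real.pi * lam ^ 2 * ‖y‖ ^ 2 : ℝ) : ℂ)) *
        conj (Complex.exp (-((Real.pi * ‖y - x‖ ^ 2 : ℝ) : ℂ))) =
      Complex.exp (-((Real.pi * (lam ^ 2 / s) * ‖x‖ ^ 2 : ℝ) : ℂ)) *
        Complex.exp (-(((Real.pi * s : ℝ) : ℂ)) * (‖y - c‖ : ℂ) ^ 2 +
          (-(2 * (Real.pi : ℂ) * Complex.I)) * (⟪ω, y⟫ : ℂ)) := by
    intro y
    rw [← Complex.exp_conj, map_neg, Complex.conj_ofReal, ← Complex.exp_add, ← Complex.exp_add,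
      ← Complex.exp_add]
    congr 1
    have e1 : ‖y - x‖ ^ 2 = ‖y‖ ^ 2 - 2 * ⟪y, x⟫ + ‖x‖ ^ 2 := norm_sub_sq_real y x
    have e2 : ‖y - c‖ ^ 2 = ‖y‖ ^ 2 - 2 * (s⁻¹ * ⟪y, x⟫) + s⁻¹ ^ 2 * ‖x‖ ^ 2 := by
      rw [norm_sub_sq_real, hc_def, real_inner_smul_right, norm_smul]
      rw [norm_inv, Real.norm_eq_abs, abs_of_pos hs, mul_pow]
    have key : -(Real.pi * lam ^ 2 * ‖y‖ ^ 2) + -(Real.pi * ‖y - x‖ ^ 2)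
        = -(Real.pi * (lam ^ 2 / s) * ‖x‖ ^ 2) + -((Real.pi * s) * ‖y - c‖ ^ 2) := by
      rw [e1, e2, hs_def]
      field_simp
      ring
    have keyC := congrArg (fun r : ℝ => (r : ℂ)) key
    push_cast at keyC ⊢
    linear_combination keyC
  -- compute the integral
  have h2 : STFT (fun y => Complex.exp (-((Real.pi * ‖y‖ ^ 2 : ℝ) : ℂ)))
        (fun y => Complex.exp (-((Real.pi * lam ^ 2 * ‖y‖ ^ 2 : ℝ) : ℂ))) x ω =
      Complex.exp (-((Real.pi * (lam ^ 2 / s) * ‖x‖ ^ 2 : ℝ) : ℂ)) *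
        ∫ y : Ed d, Complex.exp (-(((Real.pi * s : ℝ) : ℂ)) * (‖y - c‖ : ℂ) ^ 2 +
          (-(2 * (Real.pi : ℂ) * Complex.I)) * (⟪ω, y⟫ : ℂ)) := by
    rw [STFT]
    simp_rw [h1]
    rw [integral_const_mul]
  have h3 : (∫ y : Ed d, Complex.exp (-(((Real.pi * s : ℝ) : ℂ)) * (‖y - c‖ : ℂ) ^ 2 +
          (-(2 * (Real.pi : ℂ) * Complex.I)) * (⟪ω, y⟫ : ℂ)))
      = Complex.exp ((-(2 * (Real.pi : ℂ) * Complex.I)) * (⟪ω, c⟫ : ℂ)) *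
        ∫ z : Ed d, Complex.exp (-(((Real.pi * s : ℝ) : ℂ)) * (‖z‖ : ℂ) ^ 2 +
          (-(2 * (Real.pi : ℂ) * Complex.I)) * (⟪ω, z⟫ : ℂ)) := by
    rw [← integral_add_right_eq_self (μ := volume)
      (fun y : Ed d => Complex.exp (-(((Real.pi * s : ℝ) : ℂ)) * (‖y - c‖ : ℂ) ^ 2 +
        (-(2 * (Real.pi : ℂ) * Complex.I)) * (⟪ω, y⟫ : ℂ))) c, ← integral_const_mul]
    congr 1 with z
    rw [← Complex.exp_add]
    congr 1
    rw [add_sub_cancel_right, inner_add_right]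
    push_cast
    ring
  have h4 : (∫ z : Ed d, Complex.exp (-(((Real.pi * s : ℝ) : ℂ)) * (‖z‖ : ℂ) ^ 2 +
          (-(2 * (Real.pi : ℂ) * Complex.I)) * (⟪ω, z⟫ : ℂ)))
      = ((Real.pi : ℂ) / ((Real.pi * s : ℝ) : ℂ)) ^ ((d : ℂ) / 2) *
        Complex.exp ((-(2 * (Real.pi : ℂ) * Complex.I)) ^ 2 * (‖ω‖ : ℂ) ^ 2 /
          (4 * ((Real.pi * s : ℝ) : ℂ))) := by
    have := GaussianFourier.integral_cexp_neg_mul_sq_norm_add (V := Ed d) hbre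
      (-(2 * (Real.pi : ℂ) * Complex.I)) ω
    rw [this]
    congr 2
    simp
  -- now take norms
  rw [h2, h3, h4]
  have hexp2 : (-(2 * (Real.pi : ℂ) * Complex.I)) ^ 2 * (‖ω‖ : ℂ) ^ 2 /
      (4 * ((Real.pi * s : ℝ) : ℂ)) = ((-(Real.pi * (1 / s) * ‖ω‖ ^ 2) : ℝ) : ℂ) := by
    have hI : (-(2 * (Real.pi : ℂ) * Complex.I)) ^ 2 = -(4 * (Real.pi : ℂ) ^ 2) := by
      rw [neg_pow, mul_pow, mul_pow, Complex.I_sq]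
      ring
    rw [hI]
    have hsne : ((Real.pi * s : ℝ) : ℂ) ≠ 0 := by
      simp only [ne_eq, Complex.ofReal_eq_zero]
      positivity
    rw [div_eq_iff (by simpa using hsne)]
    have hne : ((1:ℂ) + (lam:ℂ) ^ 2) ≠ 0 := by
      have : ((1:ℝ) + lam ^ 2) ≠ 0 := by positivity
      exact_mod_cast Complex.ofReal_ne_zero.mpr this
    rw [hs_def]
    push_cast
    field_simp
  have hpow : ((Real.pi : ℂ) / ((Real.pi * s : ℝ) : ℂ)) ^ ((d : ℂ) / 2)
      = ((s ^ (-((d : ℝ) / 2)) : ℝ) : ℂ) := by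
    have hbase : (Real.pi : ℂ) / ((Real.pi * s : ℝ) : ℂ) = ((s⁻¹ : ℝ) : ℂ) := by
      rw [show (Real.pi : ℂ) = ((Real.pi : ℝ) : ℂ) from rfl, ← Complex.ofReal_div]
      congr 1
      field_simp
    rw [hbase, show ((d:ℂ)/2) = (((d:ℝ)/2 : ℝ) : ℂ) by push_cast; ring,
      ← Complex.ofReal_cpow (by positivity : (0:ℝ) ≤ s⁻¹)]
    congr 1
    rw [Real.inv_rpow hs.le, Real.rpow_neg hs.le]
  rw [hexp2, hpow]
  rw [norm_mul, norm_mul, norm_mul]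
  rw [Complex.norm_exp]
  rw [Complex.norm_exp]
  rw [Complex.norm_exp]
  rw [Complex.norm_real, Real.norm_eq_abs]
  have hre1 : (-((Real.pi * (lam ^ 2 / s) * ‖x‖ ^ 2 : ℝ) : ℂ)).re
      = -(Real.pi * (lam ^ 2 / s)) * ‖x‖ ^ 2 := by
    rw [Complex.neg_re, Complex.ofReal_re]; ring
  have hre2 : ((-(2 * (Real.pi : ℂ) * Complex.I)) * (⟪ω, c⟫ : ℂ)).re = 0 := by
    simp [Complex.mul_re]
  have hre3 : ((-(Real.pi * (1 / s) * ‖ω‖ ^ 2) : ℝ) : ℂ).re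
      = -(Real.pi * (1 / s)) * ‖ω‖ ^ 2 := by
    rw [Complex.ofReal_re]; ring
  rw [hre1, hre2, hre3, Real.exp_zero, abs_of_pos (Real.rpow_pos_of_pos hs _)]
  ring

-- essSup lower bound for continuous nonneg functions
lemma ofReal_le_eLpNormEssSup_of_continuous {d : ℕ} (f : Ed d → ℝ) (hf : Continuous f)
    (x₀ : Ed d) (hfx : 0 ≤ f x₀) :
    ENNReal.ofReal (f x₀) ≤ eLpNormEssSup f volume := by
  by_contra h
  push_neg at h
  have htop : eLpNormEssSup f volume ≠ ⊤ := (h.trans_le le_top).ne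
  have hlt : (eLpNormEssSup f volume).toReal < f x₀ :=
    (ENNReal.lt_ofReal_iff_toReal_lt htop).mp h
  set U : Set (Ed d) := {x | (eLpNormEssSup f volume).toReal < f x} with hU
  have hUopen : IsOpen U := isOpen_lt continuous_const hf
  have hUpos : 0 < volume U := hUopen.measure_pos volume ⟨x₀, hlt⟩
  have hae : ∀ᵐ x : Ed d, ¬ x ∈ U := by
    filter_upwards [ae_le_eLpNormEssSup (f := f) (μ := volume)] with x hx hxU
    have h1 : ‖f x‖ ≤ (eLpNormEssSup f volume).toReal := by
      have := ENNReal.toReal_mono htop hx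
      simpa using this
    have h2 : f x ≤ (eLpNormEssSup f volume).toReal := (le_abs_self _).trans h1
    exact absurd hxU (not_lt.mpr h2)
  have : volume U = 0 := by
    have := hae
    rwa [← MeasureTheory.measure_eq_zero_iff_ae_notMem] at this
  exact hUpos.ne' this

lemma integrable_gauss (d : ℕ) (b : ℝ) (hb : 0 < b) :
    Integrable (fun x : Ed d => Real.exp (-b * ‖x‖ ^ 2)) := by
  have h := (GaussianFourier.integrable_cexp_neg_mul_sq_norm_add (V := Ed d)
    (b := ((b : ℝ) : ℂ)) (by simpa using hb) 0 0).norm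
  refine h.congr (ae_of_all _ fun v => ?_)
  simp only [Complex.norm_exp]
  congr 1
  rw [show (-((b:ℝ):ℂ) * (‖v‖:ℂ) ^ 2 + 0 * ((⟪(0:Ed d), v⟫ : ℝ):ℂ))
      = ((-b * ‖v‖ ^ 2 : ℝ) : ℂ) by push_cast; ring, Complex.ofReal_re]

lemma eLpNorm_gaussian (d : ℕ) (p : ℝ≥0∞) (hp : 1 ≤ p) (K a : ℝ) (hK : 0 < K) (ha : 0 < a) :
    eLpNorm (fun x : Ed d => K * Real.exp (-(Real.pi * a) * ‖x‖ ^ 2)) p volume =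
      ENNReal.ofReal (K * (a * p.toReal) ^ (-((d : ℝ) / (2 * p.toReal)))) := by
  rcases eq_or_ne p ∞ with hptop | hptop
  · rw [hptop, eLpNorm_exponent_top, ENNReal.toReal_top]
    rw [show (a * 0 : ℝ) ^ (-((d : ℝ) / (2 * 0))) = 1 by
      norm_num]
    rw [mul_one]
    apply le_antisymm
    · apply eLpNormEssSup_le_of_ae_bound (C := K)
      filter_upwards with x
      rw [Real.norm_eq_abs, _root_.abs_of_nonneg (show (0:ℝ) ≤
        K * Real.exp (-(Real.pi * a) * ‖x‖ ^ 2) by positivity)]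
      have hx0 : (0:ℝ) ≤ Real.pi * a * ‖x‖ ^ 2 := by positivity
      nlinarith [Real.exp_le_one_iff.mpr (by nlinarith :
        -(Real.pi * a) * ‖x‖ ^ 2 ≤ 0), Real.exp_pos (-(Real.pi * a) * ‖x‖ ^ 2)]
    · have hcont : Continuous (fun x : Ed d => K * Real.exp (-(Real.pi * a) * ‖x‖ ^ 2)) := by
        continuity
      have := ofReal_le_eLpNormEssSup_of_continuous _ hcont 0 (by positivity)
      simpa using this
  · have hp0 : p ≠ 0 := by
      intro h; rw [h] at hp; simp at hp
    have hp' : 0 < p.toReal := ENNReal.toReal_pos hp0 hptop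
    rw [eLpNorm_eq_lintegral_rpow_enorm_toReal hp0 hptop]
    have h1 : ∀ x : Ed d, (‖K * Real.exp (-(Real.pi * a) * ‖x‖ ^ 2)‖ₑ) ^ p.toReal
        = ENNReal.ofReal (K ^ p.toReal *
            Real.exp (-(Real.pi * (a * p.toReal)) * ‖x‖ ^ 2)) := by
      intro x
      rw [Real.enorm_eq_ofReal (by positivity), ENNReal.ofReal_rpow_of_pos (by positivity),
        Real.mul_rpow hK.le (Real.exp_pos _).le, ← Real.exp_mul]
      congr 2
      ring
    simp_rw [h1]
    have hint0 : Integrable (fun x : Ed d =>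
        K ^ p.toReal * Real.exp (-(Real.pi * (a * p.toReal)) * ‖x‖ ^ 2)) :=
      (integrable_gauss d (Real.pi * (a * p.toReal)) (by positivity)).const_mul _
    rw [← ofReal_integral_eq_lintegral_ofReal hint0 (ae_of_all _ fun x => by positivity)]
    have hint2 : ∫ x : Ed d, K ^ p.toReal * Real.exp (-(Real.pi * (a * p.toReal)) * ‖x‖ ^ 2)
        = K ^ p.toReal * (a * p.toReal) ^ (-((d : ℝ) / 2)) := by
      rw [integral_const_mul, GaussianFourier.integral_rexp_neg_mul_sq_norm
        (by positivity : (0:ℝ) < Real.pi * (a * p.toReal))]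
      congr 1
      rw [finrank_euclideanSpace_fin,
        show Real.pi / (Real.pi * (a * p.toReal)) = (a * p.toReal)⁻¹ by
          field_simp,
        Real.inv_rpow (by positivity), ← Real.rpow_neg (by positivity)]
    rw [hint2, ENNReal.ofReal_rpow_of_pos (by positivity)]
    congr 1
    rw [Real.mul_rpow (by positivity) (by positivity),
      ← Real.rpow_mul hK.le, ← Real.rpow_mul (by positivity : (0:ℝ) ≤ a * p.toReal)]
    congr 1
    · rw [mul_one_div_cancel hp'.ne', Real.rpow_one]
    · congr 1
      field_simp

lemma ratio_bound {E u v : ℝ} (hu : 0 < u) (huv : u ≤ v) (hvu : v ≤ 2 * u) :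
    (2:ℝ) ^ (-|E|) * v ^ E ≤ u ^ E ∧ u ^ E ≤ 2 ^ |E| * v ^ E := by
  have hv : 0 < v := hu.trans_le huv
  have hvE : 0 ≤ v ^ E := Real.rpow_nonneg hv.le E
  rcases le_or_gt 0 E with hE | hE
  · rw [_root_.abs_of_nonneg hE]
    constructor
    · have h2 : v ^ E ≤ (2 * u) ^ E := Real.rpow_le_rpow hv.le hvu hE
      rw [Real.mul_rpow (by norm_num) hu.le] at h2
      rw [Real.rpow_neg (by norm_num)]
      have h3 : (0:ℝ) < 2 ^ E := Real.rpow_pos_of_pos (by norm_num) E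
      rw [inv_mul_eq_div, div_le_iff₀ h3]
      nlinarith
    · have h1 : u ^ E ≤ v ^ E := Real.rpow_le_rpow hu.le huv hE
      have h2 : (1:ℝ) ≤ 2 ^ E := Real.one_le_rpow (by norm_num) hE
      nlinarith
  · rw [_root_.abs_of_neg hE]
    constructor
    · rw [neg_neg]
      have h1 : v ^ E ≤ u ^ E := Real.rpow_le_rpow_of_nonpos hu huv hE.le
      have h2 : (2:ℝ) ^ E ≤ 1 := Real.rpow_le_one_of_one_le_of_nonpos (by norm_num) hE.le
      nlinarith
    · have h2 : (2 * u) ^ E ≤ v ^ E := Real.rpow_le_rpow_of_nonpos (by positivity) hvu hE.le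
      rw [Real.mul_rpow (by norm_num) hu.le] at h2
      have h3 : (0:ℝ) < 2 ^ E := Real.rpow_pos_of_pos (by norm_num) E
      rw [Real.rpow_neg (by norm_num), inv_mul_eq_div, le_div_iff₀ h3]
      nlinarith

lemma N_eq (d : ℕ) (p' q' lam s : ℝ) (hp' : 0 ≤ p') (hq' : 0 ≤ q') (hlam : 0 < lam)
    (hs : 0 < s) :
    (s ^ (-((d:ℝ)/2)) * ((lam^2/s) * p') ^ (-((d:ℝ)/(2*p')))) *
        ((1/s) * q') ^ (-((d:ℝ)/(2*q')))
      = (p' ^ (-((d:ℝ)/(2*p'))) * q' ^ (-((d:ℝ)/(2*q')))) * lam ^ (-((d:ℝ)/p')) *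
        s ^ (((d:ℝ)/(2*p') + (d:ℝ)/(2*q')) - (d:ℝ)/2) := by
  have h1 : ((lam^2/s) * p') ^ (-((d:ℝ)/(2*p')))
      = lam ^ (-((d:ℝ)/p')) * s ^ ((d:ℝ)/(2*p')) * p' ^ (-((d:ℝ)/(2*p'))) := by
    rcases eq_or_lt_of_le hp' with h0 | h0
    · rw [← h0]
      norm_num
    · rw [Real.mul_rpow (by positivity) h0.le, Real.div_rpow (by positivity) hs.le,
        ← Real.rpow_natCast lam 2, ← Real.rpow_mul hlam.le, div_eq_mul_inv,
        ← Real.rpow_neg hs.le, neg_neg]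
      rw [show ((2:ℕ):ℝ) * -((d:ℝ)/(2*p')) = -((d:ℝ)/p') by
        push_cast; field_simp]
  have h2 : ((1/s) * q') ^ (-((d:ℝ)/(2*q')))
      = s ^ ((d:ℝ)/(2*q')) * q' ^ (-((d:ℝ)/(2*q'))) := by
    rcases eq_or_lt_of_le hq' with h0 | h0
    · rw [← h0]
      norm_num
    · rw [Real.mul_rpow (by positivity) h0.le, one_div, Real.inv_rpow hs.le,
        ← Real.rpow_neg hs.le, neg_neg]
  rw [h1, h2,
    show (((d:ℝ)/(2*p') + (d:ℝ)/(2*q')) - (d:ℝ)/2)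
      = (d:ℝ)/(2*p') + ((d:ℝ)/(2*q') + -((d:ℝ)/2)) by ring,
    Real.rpow_add hs, Real.rpow_add hs]
  rw [Real.rpow_neg hs.le, ← Real.rpow_neg hs.le ((d:ℝ)/2)]
  ring


/-- for `1 ≤ p, q ≤ ∞`, the mixed `L^{p,q}` norm of the STFT of the dilated
Gaussian `φ_λ(x) = e^{-πλ²|x|²}` with Gaussian window satisfies
`‖V_g φ_λ‖_{L^{p,q}} ≍ λ^{-d/p} (1+λ)^{d(1/p+1/q-1)}`, with constants independent of `λ > 0`.
(The conventions `1/∞ = 0` are realized via `ENNReal.toReal` and division by zero.) -/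
theorem stmt_17 (d : ℕ) (p q : ℝ≥0∞) (hp : 1 ≤ p) (hq : 1 ≤ q) :
    ∃ C : ℝ, 0 < C ∧ ∀ lam : ℝ, 0 < lam →
      (ENNReal.ofReal (C⁻¹ * (lam ^ (-((d : ℝ) / p.toReal)) *
          (1 + lam) ^ ((d : ℝ) * (1 / p.toReal + 1 / q.toReal - 1))))
        ≤ eLpNorm (fun ω : Ed d =>
            (eLpNorm (fun x : Ed d =>
              STFT (fun y => Complex.exp (-((Real.pi * ‖y‖ ^ 2 : ℝ) : ℂ)))
                (fun y => Complex.exp (-((Real.pi * lam ^ 2 * ‖y‖ ^ 2 : ℝ) : ℂ))) x ω)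
              p volume).toReal) q volume)
      ∧ eLpNorm (fun ω : Ed d =>
            (eLpNorm (fun x : Ed d =>
              STFT (fun y => Complex.exp (-((Real.pi * ‖y‖ ^ 2 : ℝ) : ℂ)))
                (fun y => Complex.exp (-((Real.pi * lam ^ 2 * ‖y‖ ^ 2 : ℝ) : ℂ))) x ω)
              p volume).toReal) q volume
        ≤ ENNReal.ofReal (C * (lam ^ (-((d : ℝ) / p.toReal)) *
            (1 + lam) ^ ((d : ℝ) * (1 / p.toReal + 1 / q.toReal - 1)))) := by
  have hp'0 : (0:ℝ) ≤ p.toReal := ENNReal.toReal_nonneg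
  have hq'0 : (0:ℝ) ≤ q.toReal := ENNReal.toReal_nonneg
  have hA1 : (0:ℝ) < p.toReal ^ (-((d:ℝ)/(2*p.toReal))) := by
    rcases eq_or_ne p.toReal 0 with h | h
    · rw [h]
      norm_num
    · exact Real.rpow_pos_of_pos (lt_of_le_of_ne hp'0 (Ne.symm h)) _
  have hA2 : (0:ℝ) < q.toReal ^ (-((d:ℝ)/(2*q.toReal))) := by
    rcases eq_or_ne q.toReal 0 with h | h
    · rw [h]
      norm_num
    · exact Real.rpow_pos_of_pos (lt_of_le_of_ne hq'0 (Ne.symm h)) _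
  set A : ℝ := p.toReal ^ (-((d:ℝ)/(2*p.toReal))) * q.toReal ^ (-((d:ℝ)/(2*q.toReal)))
    with hAdef
  have hA0 : 0 < A := mul_pos hA1 hA2
  have hC0 : (0:ℝ) < (A + A⁻¹) * 2 ^ ((d:ℝ)) := by positivity
  refine ⟨(A + A⁻¹) * 2 ^ ((d:ℝ)), hC0, fun lam hlam => ?_⟩
  set s : ℝ := 1 + lam ^ 2 with hsdef
  have hs : (0:ℝ) < s := by positivity
  set EE : ℝ := ((d:ℝ)/(2*p.toReal) + (d:ℝ)/(2*q.toReal)) - (d:ℝ)/2 with hEEdef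
  -- inner norm
  have hinner : ∀ ω : Ed d,
      eLpNorm (fun x : Ed d =>
        STFT (fun y => Complex.exp (-((Real.pi * ‖y‖ ^ 2 : ℝ) : ℂ)))
          (fun y => Complex.exp (-((Real.pi * lam ^ 2 * ‖y‖ ^ 2 : ℝ) : ℂ))) x ω) p volume
      = ENNReal.ofReal ((s ^ (-((d:ℝ)/2)) * Real.exp (-(Real.pi * (1/s)) * ‖ω‖ ^ 2)) *
          ((lam ^ 2 / s) * p.toReal) ^ (-((d:ℝ)/(2*p.toReal)))) := by
    intro ω
    rw [← eLpNorm_norm]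
    have heq : (fun x : Ed d =>
        ‖STFT (fun y => Complex.exp (-((Real.pi * ‖y‖ ^ 2 : ℝ) : ℂ)))
          (fun y => Complex.exp (-((Real.pi * lam ^ 2 * ‖y‖ ^ 2 : ℝ) : ℂ))) x ω‖)
        = fun x : Ed d => (s ^ (-((d:ℝ)/2)) * Real.exp (-(Real.pi * (1/s)) * ‖ω‖ ^ 2)) *
            Real.exp (-(Real.pi * (lam ^ 2 / s)) * ‖x‖ ^ 2) := by
      funext x
      rw [norm_stft d lam hlam x ω]
      ring
    rw [heq, eLpNorm_gaussian d p hp _ _ (by positivity) (by positivity)]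
  -- outer function
  have houter : (fun ω : Ed d =>
      (eLpNorm (fun x : Ed d =>
        STFT (fun y => Complex.exp (-((Real.pi * ‖y‖ ^ 2 : ℝ) : ℂ)))
          (fun y => Complex.exp (-((Real.pi * lam ^ 2 * ‖y‖ ^ 2 : ℝ) : ℂ))) x ω)
        p volume).toReal)
      = fun ω : Ed d =>
        (s ^ (-((d:ℝ)/2)) * ((lam ^ 2 / s) * p.toReal) ^ (-((d:ℝ)/(2*p.toReal)))) *
          Real.exp (-(Real.pi * (1/s)) * ‖ω‖ ^ 2) := by
    funext ω
    rw [hinner ω, ENNReal.toReal_ofReal (by positivity)]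
    ring
  have hKpos : (0:ℝ) < s ^ (-((d:ℝ)/2)) *
      ((lam ^ 2 / s) * p.toReal) ^ (-((d:ℝ)/(2*p.toReal))) := by
    apply mul_pos (Real.rpow_pos_of_pos hs _)
    rcases eq_or_ne p.toReal 0 with h | h
    · rw [h]
      norm_num
    · have hppos : (0:ℝ) < p.toReal := lt_of_le_of_ne hp'0 (Ne.symm h)
      exact Real.rpow_pos_of_pos (by positivity) _
  have key : eLpNorm (fun ω : Ed d =>
      (eLpNorm (fun x : Ed d =>
        STFT (fun y => Complex.exp (-((Real.pi * ‖y‖ ^ 2 : ℝ) : ℂ)))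
          (fun y => Complex.exp (-((Real.pi * lam ^ 2 * ‖y‖ ^ 2 : ℝ) : ℂ))) x ω)
        p volume).toReal) q volume
      = ENNReal.ofReal (A * lam ^ (-((d:ℝ)/p.toReal)) * s ^ EE) := by
    rw [houter, eLpNorm_gaussian d q hq _ _ hKpos (by positivity)]
    congr 1
    rw [N_eq d p.toReal q.toReal lam s hp'0 hq'0 hlam hs]
  -- exponent bounds
  have hdp : (0:ℝ) ≤ (d:ℝ)/(2*p.toReal) := by positivity
  have hdq : (0:ℝ) ≤ (d:ℝ)/(2*q.toReal) := by positivity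
  have hEp : (d:ℝ)/(2*p.toReal) ≤ (d:ℝ)/2 := by
    rcases eq_or_ne p.toReal 0 with h | h
    · rw [h]
      norm_num
      positivity
    · have hptop : p ≠ ⊤ := by
        intro htop
        rw [htop] at h
        simp at h
      have h1 : (1:ℝ) ≤ p.toReal := by
        rw [← ENNReal.toReal_one]
        exact ENNReal.toReal_mono hptop hp
      rw [div_le_div_iff₀ (by positivity) (by norm_num)]
      have : (0:ℝ) ≤ (d:ℝ) := Nat.cast_nonneg d
      nlinarith
  have hEq : (d:ℝ)/(2*q.toReal) ≤ (d:ℝ)/2 := by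
    rcases eq_or_ne q.toReal 0 with h | h
    · rw [h]
      norm_num
      positivity
    · have hqtop : q ≠ ⊤ := by
        intro htop
        rw [htop] at h
        simp at h
      have h1 : (1:ℝ) ≤ q.toReal := by
        rw [← ENNReal.toReal_one]
        exact ENNReal.toReal_mono hqtop hq
      rw [div_le_div_iff₀ (by positivity) (by norm_num)]
      have : (0:ℝ) ≤ (d:ℝ) := Nat.cast_nonneg d
      nlinarith
  have hEabs : |EE| ≤ (d:ℝ) := by
    have hd2 : (0:ℝ) ≤ (d:ℝ)/2 := by positivity
    rw [abs_le]
    constructor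
    · rw [hEEdef]; linarith
    · rw [hEEdef]; linarith
  have hsq1 : s ≤ (1+lam)^2 := by rw [hsdef]; nlinarith
  have hsq2 : (1+lam)^2 ≤ 2 * s := by rw [hsdef]; nlinarith [sq_nonneg (1 - lam)]
  have hratio := ratio_bound (E := EE) hs hsq1 hsq2
  have h2E : (2:ℝ) ^ |EE| ≤ 2 ^ ((d:ℝ)) := Real.rpow_le_rpow_of_exponent_le one_le_two hEabs
  have h2E' : (2:ℝ) ^ (-(d:ℝ)) ≤ 2 ^ (-|EE|) :=
    Real.rpow_le_rpow_of_exponent_le one_le_two (by linarith)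
  have hT : (1+lam) ^ ((d:ℝ) * (1/p.toReal + 1/q.toReal - 1))
      = (((1+lam)^2 : ℝ)) ^ EE := by
    rw [← Real.rpow_natCast (1+lam) 2, ← Real.rpow_mul (by positivity : (0:ℝ) ≤ 1 + lam)]
    congr 1
    rw [hEEdef]
    push_cast
    ring
  have hL : (0:ℝ) < lam ^ (-((d:ℝ)/p.toReal)) := Real.rpow_pos_of_pos hlam _
  have hvE : (0:ℝ) ≤ ((1+lam)^2 : ℝ) ^ EE := Real.rpow_nonneg (by positivity) _
  have hsE : (0:ℝ) ≤ s ^ EE := Real.rpow_nonneg hs.le _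
  have hAinv : (A + A⁻¹)⁻¹ ≤ A := by
    rw [inv_le_comm₀ (by positivity) hA0]
    exact le_add_of_nonneg_left hA0.le
  constructor
  · rw [key]
    apply ENNReal.ofReal_le_ofReal
    rw [hT]
    calc ((A + A⁻¹) * 2 ^ ((d:ℝ)))⁻¹ *
          (lam ^ (-((d:ℝ)/p.toReal)) * ((1+lam)^2 : ℝ) ^ EE)
        = ((A + A⁻¹)⁻¹ * 2 ^ (-(d:ℝ))) *
          (lam ^ (-((d:ℝ)/p.toReal)) * ((1+lam)^2 : ℝ) ^ EE) := by
          rw [mul_inv, Real.rpow_neg (by norm_num : (0:ℝ) ≤ 2)]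
      _ ≤ (A * 2 ^ (-|EE|)) * (lam ^ (-((d:ℝ)/p.toReal)) * ((1+lam)^2 : ℝ) ^ EE) := by
          apply mul_le_mul_of_nonneg_right _ (by positivity)
          exact mul_le_mul hAinv h2E' (by positivity) hA0.le
      _ = (A * lam ^ (-((d:ℝ)/p.toReal))) * (2 ^ (-|EE|) * ((1+lam)^2 : ℝ) ^ EE) := by
          ring
      _ ≤ (A * lam ^ (-((d:ℝ)/p.toReal))) * s ^ EE := by
          apply mul_le_mul_of_nonneg_left hratio.1 (by positivity)
      _ = A * lam ^ (-((d:ℝ)/p.toReal)) * s ^ EE := by ring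
  · rw [key]
    apply ENNReal.ofReal_le_ofReal
    rw [hT]
    calc A * lam ^ (-((d:ℝ)/p.toReal)) * s ^ EE
        ≤ A * lam ^ (-((d:ℝ)/p.toReal)) * (2 ^ |EE| * ((1+lam)^2 : ℝ) ^ EE) := by
          apply mul_le_mul_of_nonneg_left hratio.2 (by positivity)
      _ = (A * 2 ^ |EE|) * (lam ^ (-((d:ℝ)/p.toReal)) * ((1+lam)^2 : ℝ) ^ EE) := by
          ring
      _ ≤ ((A + A⁻¹) * 2 ^ ((d:ℝ))) * (lam ^ (-((d:ℝ)/p.toReal)) * ((1+lam)^2 : ℝ) ^ EE) := by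
          apply mul_le_mul_of_nonneg_right _ (by positivity)
          apply mul_le_mul (le_add_of_nonneg_right (by positivity)) h2E (by positivity)
            (by positivity)
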